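/- Let (M, P, T) be a Rota-Baxter paired A-module of weight λ such that both P and T are idempotent (P∘P = P and T∘T = T). Then for all a ∈ A and m ∈ M: (1 + λ)·T(P(a)·m) = 0 and (1 + λ)·(P(a)·T(m) − λ·T(a·m)) = 0. -/

import Mathlib

/-- if `(M, P, T)` is a Rota-Baxter paired `A`-module of weight `l`
with both `P` and `T` idempotent, then `(1 + l) • T(P(a)·m) = 0` and
`(1 + l) • (P(a)·T(m) - l·T(a·m)) = 0` for all `a`, `m`. -/
theorem stmt8 {k A M : Type*} [CommRing k] [Ring A] [Algebra k A]
    [AddCommGroup M] [Module k M] [Module A M] [IsScalarTower k A M]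
    (l : k) (P : A →ₗ[k] A) (T : M →ₗ[k] M)
    (hRBP : ∀ (a : A) (m : M),
      P a • T m = T (P a • m) + T (a • T m) + l • T (a • m))
    (hP : ∀ a : A, P (P a) = P a) (hT : ∀ m : M, T (T m) = T m) :
    ∀ (a : A) (m : M),
      (1 + l) • T (P a • m) = 0 ∧
      (1 + l) • (P a • T m - l • T (a • m)) = 0 := by
  intro a m
  have eq0 := hRBP a m
  -- T fixes P a • T m
  have hfix : T (P a • T m) = P a • T m := by
    have h := congrArg T eq0
    simp only [map_add, map_smul, hT] at h
    rw [h, ← eq0]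
  have eq1 := hRBP (P a) m
  rw [hP] at eq1
  have h1 : (1 + l) • T (P a • m) = 0 := by
    have h := congrArg T eq1
    simp only [map_add, map_smul, hT] at h
    rw [hfix] at h
    have h2 : P a • T m = (T (P a • m) + l • T (P a • m)) + P a • T m := by
      nth_rewrite 1 [h]; abel
    rw [add_smul, one_smul]
    exact right_eq_add.mp h2
  have eq2 := hRBP a (T m)
  rw [hT, hfix] at eq2
  have h2 : (1 + l) • T (a • T m) = 0 := by
    have h3 : P a • T m = P a • T m + (T (a • T m) + l • T (a • T m)) := by
      nth_rewrite 1 [eq2]; abel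
    rw [add_smul, one_smul]
    exact (left_eq_add.mp h3)
  refine ⟨h1, ?_⟩
  have : P a • T m - l • T (a • m) = T (P a • m) + T (a • T m) := by
    rw [eq0]; abel
  rw [this, smul_add, h1, h2, add_zero]
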